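/- Let μ be a Gaussian measure on an orthogonal direct sum H = H1 ⊕ H2 of separable real Hilbert spaces, and fix an ordered orthonormal basis of H2. For each n let Dⁿ : H1 → H1 be the bounded operator determined by ⟨Dⁿ h, h'⟩ = E_μ[⟨X1 − E_μ[X1 | F2ⁿ], h⟩ ⟨X1 − E_μ[X1 | F2ⁿ], h'⟩], and let D : H1 → H1 be determined by the same formula with F2 in place of F2ⁿ. Then Dⁿ converges to D in the weak operator topology: ⟨Dⁿ h, h'⟩ → ⟨D h, h'⟩ for all h, h' ∈ H1. -/

import Mathlib

open MeasureTheory ProbabilityTheory Filter Topology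
open scoped RealInnerProductSpace

noncomputable section

/-- Gaussian measure on a real inner product space. -/
def IsGaussianMeasure {E : Type*} [NormedAddCommGroup E] [InnerProductSpace ℝ E]
    [MeasurableSpace E] (μ : Measure E) : Prop :=
  IsProbabilityMeasure μ ∧ ∀ h : E, ∃ (m : ℝ) (v : NNReal),
    μ.map (fun x => ⟪h, x⟫) = gaussianReal m v

variable {H : Type*} [NormedAddCommGroup H] [InnerProductSpace ℝ H] [CompleteSpace H]

/-- The orthogonal projection onto a closed subspace, viewed as a map `H → H`. -/
def projL (S : Submodule ℝ H) [CompleteSpace S] : H →L[ℝ] H :=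
  S.subtypeL.comp (S.orthogonalProjectionOnto)

/-- For an orthonormal family `e`, the orthogonal projection onto the span of
`e 0, …, e (n-1)`, viewed as a map `H → H`. -/
def projFin (e : ℕ → H) (n : ℕ) : H →L[ℝ] H :=
  ∑ i ∈ Finset.range n, (innerSL ℝ (e i)).smulRight (e i)

/-- The orthogonal projection `Pⁿ = P_{H1} + P_{H2ⁿ}` onto `H1 ⊕ H2ⁿ`. -/
def Pn (H1 : Submodule ℝ H) [CompleteSpace H1] (e : ℕ → H) (n : ℕ) : H →L[ℝ] H :=
  projL H1 + projFin e n

/-- The sub-σ-algebra of the Borel σ-algebra of `H` generated by the orthogonal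
projection onto `H2 = H1ᗮ`. -/
def F2 [MeasurableSpace H] (H1 : Submodule ℝ H) [CompleteSpace H1] : MeasurableSpace H :=
  MeasurableSpace.comap (fun x => projL H1ᗮ x) inferInstance

/-- The sub-σ-algebra of the Borel σ-algebra of `H` generated by `P_{H2ⁿ} ∘ P2`. -/
def F2n [MeasurableSpace H] (H1 : Submodule ℝ H) [CompleteSpace H1]
    (e : ℕ → H) (n : ℕ) : MeasurableSpace H :=
  MeasurableSpace.comap (fun x => projFin e n (projL H1ᗮ x)) inferInstance

/-! ### Auxiliary lemmas -/

lemma integrable_sq_mul_exp_neg_mul_sq {b : ℝ} (hb : 0 < b) :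
    Integrable fun y : ℝ => y ^ 2 * Real.exp (-b * y ^ 2) := by
  have h := integrable_rpow_mul_exp_neg_mul_sq hb (by norm_num : (-1:ℝ) < 2)
  simp only [show ((2:ℝ)) = ((2:ℕ):ℝ) from by norm_num, Real.rpow_natCast] at h
  exact h

lemma memLp_two_id_gaussianReal (m : ℝ) (v : NNReal) :
    MemLp (fun x : ℝ => x) 2 (gaussianReal m v) := by
  by_cases hv : v = 0
  · subst hv
    rw [gaussianReal_zero_var]
    exact (memLp_const m).ae_eq (by
      filter_upwards [ae_eq_dirac (fun x : ℝ => x)] with x hx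
      simpa using hx.symm)
  · have hmeas : AEStronglyMeasurable (fun x : ℝ => x) (gaussianReal m v) :=
      aestronglyMeasurable_id
    rw [memLp_two_iff_integrable_sq hmeas]
    rw [gaussianReal_of_var_ne_zero m hv]
    rw [integrable_withDensity_iff (measurable_gaussianPDF m v)
      (ae_of_all _ fun x => ENNReal.ofReal_lt_top)]
    have hv' : (0:ℝ) < (v:ℝ) := NNReal.coe_pos.mpr (pos_iff_ne_zero.mpr hv)
    have hb : (0:ℝ) < (2 * (v:ℝ))⁻¹ := by positivity
    have key : Integrable (fun y : ℝ =>
        ((y + m) ^ 2 * ((Real.sqrt (2 * Real.pi * v))⁻¹ * Real.exp (-(2 * (v:ℝ))⁻¹ * y ^ 2)))) := by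
      have h2 := integrable_sq_mul_exp_neg_mul_sq hb
      have h1 := integrable_mul_exp_neg_mul_sq hb
      have h0 := integrable_exp_neg_mul_sq hb
      have : Integrable (fun y : ℝ =>
          (Real.sqrt (2 * Real.pi * v))⁻¹ *
            (y ^ 2 * Real.exp (-(2 * (v:ℝ))⁻¹ * y ^ 2)
              + (2 * m) * (y * Real.exp (-(2 * (v:ℝ))⁻¹ * y ^ 2))
              + m ^ 2 * Real.exp (-(2 * (v:ℝ))⁻¹ * y ^ 2))) :=
        (((h2.add (h1.const_mul _)).add (h0.const_mul _)).const_mul _)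
      refine this.congr (ae_of_all _ fun y => ?_)
      ring
    have := key.comp_sub_right m
    refine this.congr (ae_of_all _ fun x => ?_)
    simp only [gaussianPDF, gaussianPDFReal]
    rw [ENNReal.toReal_ofReal (by positivity)]
    have hx : x - m + m = x := by ring
    rw [hx]
    congr 2
    · field_simp

lemma projFin_apply (e : ℕ → H) (n : ℕ) (x : H) :
    projFin e n x = ∑ i ∈ Finset.range n, ⟪e i, x⟫ • e i := by
  simp [projFin]

lemma projFin_inner_eq {e : ℕ → H} (he : Orthonormal ℝ e) {n : ℕ} {i : ℕ} (hi : i < n) (x : H) :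
    ⟪e i, projFin e n x⟫ = ⟪e i, x⟫ := by
  rw [projFin_apply, inner_sum]
  rw [Finset.sum_eq_single i]
  · rw [real_inner_smul_right, orthonormal_iff_ite.mp he, if_pos rfl, mul_one]
  · intro j hj hne
    rw [real_inner_smul_right, orthonormal_iff_ite.mp he, if_neg (Ne.symm hne), mul_zero]
  · intro hni; exact absurd (Finset.mem_range.mpr hi) hni

lemma projFin_comp {e : ℕ → H} (he : Orthonormal ℝ e) {n m : ℕ} (hnm : n ≤ m) (x : H) :
    projFin e n (projFin e m x) = projFin e n x := by
  rw [projFin_apply e n (projFin e m x), projFin_apply e n x]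
  refine Finset.sum_congr rfl fun i hi => ?_
  rw [projFin_inner_eq he (lt_of_lt_of_le (Finset.mem_range.mp hi) hnm)]

lemma projFin_eq_orthogonalProjection {e : ℕ → H} (he : Orthonormal ℝ e) (n : ℕ) (x : H)
    [(Submodule.span ℝ (e '' Set.Iio n)).HasOrthogonalProjection] :
    ((Submodule.span ℝ (e '' Set.Iio n)).starProjection x : H) = projFin e n x := by
  refine Submodule.eq_starProjection_of_mem_of_inner_eq_zero ?_ ?_
  · rw [projFin_apply]
    exact Submodule.sum_mem _ fun i hi => Submodule.smul_mem _ _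
      (Submodule.subset_span ⟨i, Finset.mem_range.mp hi, rfl⟩)
  · intro w hw
    induction hw using Submodule.span_induction with
    | mem z hz =>
        obtain ⟨i, hi, rfl⟩ := hz
        rw [← real_inner_comm, inner_sub_right, projFin_inner_eq he hi, sub_self]
    | zero => exact inner_zero_right _
    | add z z' _ _ hz hz' => rw [inner_add_right, hz, hz', add_zero]
    | smul c z _ hz => rw [real_inner_smul_right, hz, mul_zero]

lemma projFin_tendsto {e : ℕ → H} (he : Orthonormal ℝ e) {y : H}
    (hy : y ∈ (Submodule.span ℝ (Set.range e)).topologicalClosure) :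
    Tendsto (fun n => projFin e n y) atTop (𝓝 y) := by
  set W : ℕ → Submodule ℝ H := fun n => Submodule.span ℝ (e '' Set.Iio n) with hW
  haveI : ∀ n, (W n).HasOrthogonalProjection := fun n => by
    haveI : FiniteDimensional ℝ (W n) :=
      FiniteDimensional.span_of_finite ℝ ((Set.finite_Iio n).image e)
    infer_instance
  have hWsup : (⨆ n, W n) = Submodule.span ℝ (Set.range e) := by
    rw [← Submodule.span_iUnion]
    congr 1
    ext x
    simp only [Set.mem_iUnion, Set.mem_image, Set.mem_Iio, Set.mem_range]
    constructor
    · rintro ⟨n, i, _, rfl⟩; exact ⟨i, rfl⟩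
    · rintro ⟨i, rfl⟩; exact ⟨i + 1, i, Nat.lt_succ_self i, rfl⟩
  haveI : (⨆ n, W n).topologicalClosure.HasOrthogonalProjection := by
    rw [hWsup]; infer_instance
  have hmono : Monotone W := fun n m hnm =>
    Submodule.span_mono (Set.image_mono (Set.Iio_subset_Iio hnm))
  have hT := Submodule.starProjection_tendsto_closure_iSup W hmono y
  have hfix : ((⨆ n, W n).topologicalClosure.starProjection y : H) = y := by
    rw [Submodule.starProjection_eq_self_iff.mpr]
    rw [hWsup]; exact hy
  rw [hfix] at hT
  refine hT.congr fun n => ?_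
  exact projFin_eq_orthogonalProjection he n y

lemma sigmaFinite_trim_of_prob {α : Type*} {m m0 : MeasurableSpace α} (hm : m ≤ m0)
    (μ : Measure α) [IsProbabilityMeasure μ] : SigmaFinite (μ.trim hm) := by
  haveI : IsFiniteMeasure (μ.trim hm) := isFiniteMeasure_trim hm
  infer_instance

lemma condexp_clm_comm {α : Type*} {m m0 : MeasurableSpace α} (hm : m ≤ m0)
    (μ : Measure α) [IsProbabilityMeasure μ] {E F : Type*}
    [NormedAddCommGroup E] [NormedSpace ℝ E] [CompleteSpace E]
    [NormedAddCommGroup F] [NormedSpace ℝ F] [CompleteSpace F]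
    (L : E →L[ℝ] F) {f : α → E} (hf : Integrable f μ) :
    (fun x => L ((μ[f|m]) x)) =ᵐ[μ] μ[fun x => L (f x)|m] := by
  haveI := sigmaFinite_trim_of_prob hm μ
  refine ae_eq_condExp_of_forall_setIntegral_eq hm (L.integrable_comp hf)
    (fun s hs hμs => (L.integrable_comp integrable_condExp).integrableOn)
    (fun s hs hμs => ?_) ?_
  · rw [L.integral_comp_comm integrable_condExp.integrableOn,
      setIntegral_condExp hm hf hs, ← L.integral_comp_comm hf.integrableOn]
  · exact L.continuous.comp_aestronglyMeasurable
      stronglyMeasurable_condExp.aestronglyMeasurable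

lemma condexpL2_ae_eq_condexp' {α : Type*} {m m0 : MeasurableSpace α} (hm : m ≤ m0)
    (μ : Measure α) [IsProbabilityMeasure μ] {g : α → ℝ} (hg : MemLp g 2 μ) :
    (condExpL2 ℝ ℝ hm (hg.toLp g) : α → ℝ) =ᵐ[μ] μ[g|m] := by
  haveI := sigmaFinite_trim_of_prob hm μ
  refine ae_eq_condExp_of_forall_setIntegral_eq hm (hg.integrable one_le_two)
    (fun s hs hμs => integrableOn_condExpL2_of_measure_ne_top hm hμs.ne _)
    (fun s hs hμs => ?_) ?_
  · rw [integral_condExpL2_eq hm (hg.toLp g) hs hμs.ne]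
    exact setIntegral_congr_ae (hm s hs) (hg.coeFn_toLp.mono fun x hx _ => hx)
  · exact lpMeas.aestronglyMeasurable _

/-- The conditional covariance operators `Dⁿ` associated with the
σ-algebras `F2ⁿ` converge to the conditional covariance operator `D` associated with `F2`
in the weak operator topology. -/
theorem conditional_covariance_truncated_tendsto_weakly
    [SecondCountableTopology H] [MeasurableSpace H] [BorelSpace H]
    (H1 : Submodule ℝ H) [CompleteSpace H1]
    (μ : Measure H) (hGauss : IsGaussianMeasure μ)
    (e : ℕ → H) (he : Orthonormal ℝ e) (hemem : ∀ k, e k ∈ H1ᗮ)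
    (hspan : (Submodule.span ℝ (Set.range e)).topologicalClosure = H1ᗮ)
    (Dn : ℕ → (H1 →L[ℝ] H1))
    (hDn : ∀ n (h h' : H1), ⟪Dn n h, h'⟫ =
      ∫ x, ⟪projL H1 x - (μ[(fun y => projL H1 y)|F2n H1 e n]) x, (h : H)⟫
        * ⟪projL H1 x - (μ[(fun y => projL H1 y)|F2n H1 e n]) x, (h' : H)⟫ ∂μ)
    (D : H1 →L[ℝ] H1)
    (hD : ∀ h h' : H1, ⟪D h, h'⟫ =
      ∫ x, ⟪projL H1 x - (μ[(fun y => projL H1 y)|F2 H1]) x, (h : H)⟫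
        * ⟪projL H1 x - (μ[(fun y => projL H1 y)|F2 H1]) x, (h' : H)⟫ ∂μ) :
    ∀ h h' : H1, Tendsto (fun n => ⟪Dn n h, h'⟫) atTop (𝓝 ⟪D h, h'⟫) := by
  intro h h'
  rename_i iSC mH iBorel iCS
  haveI : IsProbabilityMeasure μ := hGauss.1
  -- basic pointwise identity
  have hproj_self : ∀ g : H1, projL H1 (g : H) = (g : H) := by
    intro g
    show ((H1.starProjection (g : H) : H)) = (g : H)
    exact Submodule.starProjection_eq_self_iff.mpr g.2
  have hinner : ∀ (x : H) (g : H1), ⟪projL H1 x, (g : H)⟫ = ⟪x, (g : H)⟫ := by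
    intro x g
    show ⟪(H1.starProjection x : H), (g : H)⟫ = _
    rw [Submodule.inner_starProjection_left_eq_right]
    congr 1
    exact Submodule.starProjection_eq_self_iff.mpr g.2
  by_cases hfInt : Integrable (fun y => projL H1 y) μ
  swap
  · -- degenerate case: the conditional expectations are all `0`
    have heq : ∀ n, ⟪Dn n h, h'⟫ = ⟪D h, h'⟫ := by
      intro n
      rw [hDn, hD, condExp_of_not_integrable hfInt, condExp_of_not_integrable hfInt]
    have : (fun n => ⟪Dn n h, h'⟫) = fun _ => ⟪D h, h'⟫ := funext heq
    rw [this]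
    exact tendsto_const_nhds
  -- measurability facts
  have hcont_p : Continuous fun x : H => projL H1ᗮ x := (projL H1ᗮ).continuous
  have hF2le : F2 H1 ≤ mH := hcont_p.measurable.comap_le
  have hFnle : ∀ n, F2n H1 e n ≤ mH := fun n =>
    (((projFin e n).continuous.comp hcont_p).measurable).comap_le
  have hmono : Monotone fun n => F2n H1 e n := by
    intro n m hnm
    have hfun : (fun x : H => projFin e n (projL H1ᗮ x))
        = (fun z => projFin e n z) ∘ (fun x : H => projFin e m (projL H1ᗮ x)) :=
      funext fun x => (projFin_comp he hnm _).symm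
    show MeasurableSpace.comap _ _ ≤ MeasurableSpace.comap _ _
    rw [hfun, ← MeasurableSpace.comap_comp]
    exact MeasurableSpace.comap_mono ((projFin e n).continuous.measurable.comap_le)
  have hFnleF2 : ∀ n, F2n H1 e n ≤ F2 H1 := by
    intro n
    have hfun : (fun x : H => projFin e n (projL H1ᗮ x))
        = (fun z => projFin e n z) ∘ (fun x : H => projL H1ᗮ x) := rfl
    show MeasurableSpace.comap _ _ ≤ MeasurableSpace.comap _ _
    rw [hfun, ← MeasurableSpace.comap_comp]
    exact MeasurableSpace.comap_mono ((projFin e n).continuous.measurable.comap_le)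
  have hsup : (⨆ n, F2n H1 e n) = F2 H1 := by
    refine le_antisymm (iSup_le hFnleF2) ?_
    have hmeas_n : ∀ n, @Measurable H H (⨆ n, F2n H1 e n) _
        (fun x => projFin e n (projL H1ᗮ x)) := fun n =>
      (measurable_iff_comap_le.mpr le_rfl).mono (le_iSup (fun n => F2n H1 e n) n) le_rfl
    have hptw : ∀ x : H, Tendsto (fun n => projFin e n (projL H1ᗮ x)) atTop
        (𝓝 (projL H1ᗮ x)) := by
      intro x
      have : projL H1ᗮ x ∈ (Submodule.span ℝ (Set.range e)).topologicalClosure := by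
        rw [hspan]
        exact (H1ᗮ.orthogonalProjectionOnto x).2
      exact projFin_tendsto he this
    have hmeas : @Measurable H H (⨆ n, F2n H1 e n) _ (fun x => projL H1ᗮ x) := by
      exact @measurable_of_tendsto_metrizable H H (⨆ n, F2n H1 e n) _ _ mH _ _ _ hmeas_n (tendsto_pi_nhds.mpr hptw)
    exact hmeas.comap_le
  -- the filtration
  set ℱ : Filtration ℕ mH :=
    ⟨fun n => F2n H1 e n, hmono, hFnle⟩ with hℱdef
  have hℱ : ∀ n, ℱ n = F2n H1 e n := fun n => rfl
  have hsupℱ : (⨆ n, ℱ n) = F2 H1 := hsup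
  -- square integrability of the linear functionals
  have hmem2 : ∀ g : H1, MemLp (fun x : H => ⟪x, (g : H)⟫) 2 μ := by
    intro g
    obtain ⟨m, v, hmv⟩ := hGauss.2 (g : H)
    have hfun : (fun x : H => ⟪x, (g : H)⟫) = fun x : H => ⟪(g : H), x⟫ :=
      funext fun x => real_inner_comm _ _
    rw [hfun]
    have hmeas : AEMeasurable (fun x : H => ⟪(g : H), x⟫) μ :=
      (innerSL ℝ ((g : H))).continuous.measurable.aemeasurable
    have hid := memLp_two_id_gaussianReal m v
    rw [← hmv] at hid
    exact (memLp_map_measure_iff aestronglyMeasurable_id hmeas).mp hid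
  set a : H → ℝ := fun x => ⟪x, (h : H)⟫ with ha_def
  set b : H → ℝ := fun x => ⟪x, (h' : H)⟫ with hb_def
  have ha2 : MemLp a 2 μ := hmem2 h
  have hb2 : MemLp b 2 μ := hmem2 h'
  set A : Lp ℝ 2 μ := ha2.toLp a with hA_def
  set B : Lp ℝ 2 μ := hb2.toLp b with hB_def
  -- the L² submodules and projections
  set U : ℕ → Submodule ℝ (Lp ℝ 2 μ) := fun n => lpMeas ℝ ℝ (F2n H1 e n) 2 μ with hU_def
  haveI hOP : ∀ i, (U i).HasOrthogonalProjection := fun i => by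
    haveI : Fact (F2n H1 e i ≤ mH) := ⟨hFnle i⟩
    infer_instance
  haveI hOPc : (⨆ n, U n).topologicalClosure.HasOrthogonalProjection := by
    haveI : CompleteSpace ((⨆ n, U n).topologicalClosure : Submodule ℝ (Lp ℝ 2 μ)) :=
      (Submodule.isClosed_topologicalClosure _).completeSpace_coe
    infer_instance
  have hUmono : Monotone U := by
    intro n m hnm x hx
    exact mem_lpMeas_iff_aestronglyMeasurable.mpr
      ((mem_lpMeas_iff_aestronglyMeasurable.mp hx).mono (hmono hnm))
  set q : ℕ → Lp ℝ 2 μ := fun n => (condExpL2 ℝ ℝ (hFnle n) A : Lp ℝ 2 μ) with hq_def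
  set r : ℕ → Lp ℝ 2 μ := fun n => (condExpL2 ℝ ℝ (hFnle n) B : Lp ℝ 2 μ) with hr_def
  set QA : Lp ℝ 2 μ := ((⨆ n, U n).topologicalClosure.starProjection A : Lp ℝ 2 μ)
  set RB : Lp ℝ 2 μ := ((⨆ n, U n).topologicalClosure.starProjection B : Lp ℝ 2 μ)
  have hqt : Tendsto q atTop (𝓝 QA) := by
    have := Submodule.starProjection_tendsto_closure_iSup U hUmono A
    exact this
  have hrt : Tendsto r atTop (𝓝 RB) := by
    have := Submodule.starProjection_tendsto_closure_iSup U hUmono B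
    exact this
  have hqn : ∀ n, ⇑(q n) =ᵐ[μ] μ[a|F2n H1 e n] := fun n =>
    condexpL2_ae_eq_condexp' (hFnle n) μ ha2
  have hrn : ∀ n, ⇑(r n) =ᵐ[μ] μ[b|F2n H1 e n] := fun n =>
    condexpL2_ae_eq_condexp' (hFnle n) μ hb2
  -- identification of the limits with the conditional expectations w.r.t. F2
  have hlim_id : ∀ (g : H → ℝ) (hg2 : MemLp g 2 μ) (s : ℕ → Lp ℝ 2 μ)
      (S : Lp ℝ 2 μ), (∀ n, ⇑(s n) =ᵐ[μ] μ[g|F2n H1 e n]) → Tendsto s atTop (𝓝 S) →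
      ⇑S =ᵐ[μ] μ[g|F2 H1] := by
    intro g hg2 s S hsn hst
    have hnorm : Tendsto (fun n => ‖s n - S‖) atTop (𝓝 0) := by
      rw [← tendsto_iff_norm_sub_tendsto_zero] at *
      exact hst
    have heLp : Tendsto (fun n => eLpNorm (⇑(s n) - ⇑S) 2 μ) atTop (𝓝 0) := by
      have h1 : ∀ n, eLpNorm (⇑(s n) - ⇑S) 2 μ = ENNReal.ofReal ‖s n - S‖ := by
        intro n
        rw [Lp.norm_def, ENNReal.ofReal_toReal (Lp.eLpNorm_ne_top _)]
        exact (eLpNorm_congr_ae (Lp.coeFn_sub _ _)).symm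
      simp only [h1]
      have : Tendsto (fun n => ENNReal.ofReal ‖s n - S‖) atTop (𝓝 (ENNReal.ofReal 0)) :=
        (ENNReal.continuous_ofReal.tendsto _).comp hnorm
      simpa using this
    have htim : TendstoInMeasure μ (fun n => ⇑(s n)) atTop ⇑S :=
      tendstoInMeasure_of_tendsto_eLpNorm (by norm_num)
        (fun n => Lp.aestronglyMeasurable _) (Lp.aestronglyMeasurable _) heLp
    obtain ⟨ns, hns, hae2⟩ := htim.exists_seq_tendsto_ae
    have hlevy : ∀ᵐ x ∂μ, Tendsto (fun n => (μ[g|ℱ n]) x) atTop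
        (𝓝 ((μ[g|F2 H1]) x)) := by
      have := tendsto_ae_condExp (μ := μ) (ℱ := ℱ) g
      rw [hsupℱ] at this
      exact this
    have hall : ∀ᵐ x ∂μ, ∀ n, (s n) x = (μ[g|F2n H1 e n]) x := ae_all_iff.mpr hsn
    filter_upwards [hlevy, hae2, hall] with x hx1 hx2 hx3
    have hx1' : Tendsto (fun i => (μ[g|ℱ (ns i)]) x) atTop (𝓝 ((μ[g|F2 H1]) x)) :=
      hx1.comp hns.tendsto_atTop
    have hxx : (fun i => (μ[g|ℱ (ns i)]) x) = fun i => (s (ns i)) x :=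
      funext fun i => (hx3 (ns i)).symm
    rw [hxx] at hx1'
    exact tendsto_nhds_unique hx2 hx1'
  have hQA : ⇑QA =ᵐ[μ] μ[a|F2 H1] := hlim_id a ha2 q QA hqn hqt
  have hRB : ⇑RB =ᵐ[μ] μ[b|F2 H1] := hlim_id b hb2 r RB hrn hrt
  -- the key representation of the integrands
  have hfcomp : ∀ g : H1, (fun x : H => (innerSL ℝ ((g : H))) (projL H1 x))
      = fun x : H => ⟪x, (g : H)⟫ := by
    intro g
    funext x
    show ⟪(g : H), projL H1 x⟫ = ⟪x, (g : H)⟫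
    rw [real_inner_comm, hinner]
  have hrepr : ∀ (m' : MeasurableSpace H), m' ≤ mH →
      ∀ g : H1, (fun x => ⟪projL H1 x - (μ[(fun y => projL H1 y)|m']) x, (g : H)⟫)
        =ᵐ[μ] fun x => ⟪x, (g : H)⟫ - (μ[fun x => ⟪x, (g : H)⟫|m']) x := by
    intro m' hm' g
    have hcomm := condexp_clm_comm hm' μ (innerSL ℝ ((g : H))) hfInt
    rw [show (fun x => (innerSL ℝ ((g : H))) ((fun y => projL H1 y) x))
      = fun x : H => ⟪x, (g : H)⟫ from hfcomp g] at hcomm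
    filter_upwards [hcomm] with x hx
    rw [inner_sub_left, hinner]
    congr 1
    rw [← hx]
    exact real_inner_comm _ _
  -- putting things together
  have hinteq : ∀ (m' : MeasurableSpace H), m' ≤ mH →
      ∀ (s t : Lp ℝ 2 μ), ⇑s =ᵐ[μ] μ[a|m'] → ⇑t =ᵐ[μ] μ[b|m'] →
      (∫ x, ⟪projL H1 x - (μ[(fun y => projL H1 y)|m']) x, (h : H)⟫
        * ⟪projL H1 x - (μ[(fun y => projL H1 y)|m']) x, (h' : H)⟫ ∂μ)
        = (inner ℝ (A - s) (B - t) : ℝ) := by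
    intro m' hm' s t hs ht
    have hid : (inner ℝ (A - s) (B - t) : ℝ)
        = ∫ x, ((A - s : Lp ℝ 2 μ) x) * ((B - t : Lp ℝ 2 μ) x) ∂μ := by
      rw [@L2.inner_def H ℝ ℝ _ mH μ _ _ (A - s) (B - t)]
      simp only [RCLike.inner_apply, conj_trivial]
      exact integral_congr_ae (ae_of_all _ fun x => mul_comm _ _)
    rw [hid]
    refine integral_congr_ae ?_
    have h1 := hrepr m' hm' h
    have h2 := hrepr m' hm' h'
    filter_upwards [h1, h2, Lp.coeFn_sub A s, Lp.coeFn_sub B t, ha2.coeFn_toLp,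
      hb2.coeFn_toLp, hs, ht] with x hx1 hx2 hx3 hx4 hx5 hx6 hx7 hx8
    rw [hx1, hx2, hx3, hx4]
    simp only [Pi.sub_apply, RCLike.inner_apply, conj_trivial]
    rw [hx5, hx6, hx7, hx8]
  have hkey : ∀ n, ⟪Dn n h, h'⟫ = (inner ℝ (A - q n) (B - r n) : ℝ) := by
    intro n
    rw [hDn]
    exact hinteq (F2n H1 e n) (hFnle n) (q n) (r n) (hqn n) (hrn n)
  have hkeyD : ⟪D h, h'⟫ = (inner ℝ (A - QA) (B - RB) : ℝ) := by
    rw [hD]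
    exact hinteq (F2 H1) hF2le QA RB hQA hRB
  rw [hkeyD, funext hkey]
  exact Tendsto.inner (tendsto_const_nhds.sub hqt) (tendsto_const_nhds.sub hrt)

end
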